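/- arXiv:1905.04164 — 6 statements merged into one kernel-verified Lean document; each statement's English description precedes it below -/
import Mathlib

section
/- There is a nonempty open interval of sharpness parameters, namely 1/3 < λ < (1+√3)/3, for which simultaneously (1+λ)/2 > 2/3 and (1 + p(λ))/2 > 2/3, where p(λ) = (1/2)(1 − λ + √((1−λ)(1+3λ))). -/
noncomputable def wernerProb (lam : ℝ) : ℝ :=
  (1 / 2) * (1 - lam + Real.sqrt ((1 - lam) * (1 + 3 * lam)))

/-- There is a nonempty open interval 1/3 < λ < (1+√3)/3 on which both
the first-round fidelity (1+λ)/2 and the second-round fidelity (1+p(λ))/2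
exceed 2/3. -/
theorem reusability_interval :
    (1 : ℝ) / 3 < (1 + Real.sqrt 3) / 3 ∧
    ∀ lam ∈ Set.Ioo ((1:ℝ)/3) ((1 + Real.sqrt 3)/3),
      (1 + lam) / 2 > 2 / 3 ∧ (1 + wernerProb lam) / 2 > 2 / 3 := by
  have hs3 : Real.sqrt 3 ^ 2 = 3 := Real.sq_sqrt (by norm_num)
  have h1 : (1:ℝ) < Real.sqrt 3 := by nlinarith [Real.sqrt_nonneg 3]
  have h2 : Real.sqrt 3 < 2 := by nlinarith [Real.sqrt_nonneg 3]
  refine ⟨by linarith, ?_⟩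
  rintro lam ⟨hl, hr⟩
  have hlam1 : lam < 1 := by linarith
  constructor
  · linarith
  · have key : lam - 1/3 < Real.sqrt ((1 - lam) * (1 + 3 * lam)) := by
      rw [show lam - 1/3 = Real.sqrt ((lam - 1/3)^2) from (Real.sqrt_sq (by linarith)).symm]
      apply Real.sqrt_lt_sqrt (by positivity)
      nlinarith
    unfold wernerProb
    linarith
end

section
/- Define the sequence λ₁ = 1/3 and λ_{i+1} = λᵢ / p(λᵢ) where p(λ) = (1/2)(1 − λ + √((1−λ)(1+3λ))). Then λ₁ < λ₂ < ⋯ < λ₆ ≤ 1 < λ₇; i.e., exactly six rounds of weak Bell measurements with fidelity exactly 2/3 at each round are possible starting from a maximally entangled state. -/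
private lemma step (l a b sl su a' b' : ℝ)
    (ha : a ≤ l) (hb : l ≤ b)
    (ha3 : 1/3 ≤ a) (hb1 : b < 1)
    (hsl0 : 0 ≤ sl) (hsu0 : 0 ≤ su)
    (hsl : sl^2 ≤ (1-b)*(1+3*b)) (hsu : (1-a)*(1+3*a) ≤ su^2)
    (ha'0 : 0 ≤ a')
    (hA : a' * (1-a+su) ≤ 2*a) (hB : 2*b ≤ b' * (1-b+sl))
    (hpos : 0 < 1-b+sl) :
    a' ≤ l / wernerProb l ∧ l / wernerProb l ≤ b' := by
  set s := Real.sqrt ((1-l)*(1+3*l)) with hsdef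
  have harg : 0 ≤ (1-l)*(1+3*l) := by nlinarith
  have hs0 : 0 ≤ s := Real.sqrt_nonneg _
  have hs2 : s^2 = (1-l)*(1+3*l) := Real.sq_sqrt harg
  have hsls : sl ≤ s := by nlinarith [sq_nonneg (s - sl), sq_nonneg (s + sl)]
  have hssu : s ≤ su := by nlinarith [sq_nonneg (s - su), sq_nonneg (s + su)]
  have hp : wernerProb l = (1 - l + s)/2 := by
    rw [wernerProb, ← hsdef]; ring
  have hppos : 0 < wernerProb l := by rw [hp]; nlinarith
  constructor
  · rw [le_div_iff₀ hppos, hp]; nlinarith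
  · rw [div_le_iff₀ hppos, hp]; nlinarith

/-- The recursion λ₁ = 1/3, λ_{i+1} = λᵢ/p(λᵢ) satisfies
λ₁ < λ₂ < ⋯ < λ₆ ≤ 1 < λ₇: exactly six rounds at fidelity 2/3 are possible. -/
theorem mrn_six (lam : ℕ → ℝ)
    (h1 : lam 1 = 1 / 3)
    (hrec : ∀ i ≥ 1, lam (i + 1) = lam i / wernerProb (lam i)) :
    lam 1 < lam 2 ∧ lam 2 < lam 3 ∧ lam 3 < lam 4 ∧ lam 4 < lam 5 ∧
    lam 5 < lam 6 ∧ lam 6 ≤ 1 ∧ 1 < lam 7 := by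
  have e2 : lam 2 = lam 1 / wernerProb (lam 1) := hrec 1 (by norm_num)
  have e3 : lam 3 = lam 2 / wernerProb (lam 2) := hrec 2 (by norm_num)
  have e4 : lam 4 = lam 3 / wernerProb (lam 3) := hrec 3 (by norm_num)
  have e5 : lam 5 = lam 4 / wernerProb (lam 4) := hrec 4 (by norm_num)
  have e6 : lam 6 = lam 5 / wernerProb (lam 5) := hrec 5 (by norm_num)
  have e7 : lam 7 = lam 6 / wernerProb (lam 6) := hrec 6 (by norm_num)
  have b2 : (1830127/5000000 : ℝ) ≤ lam 2 ∧ lam 2 ≤ 36602541/100000000 := by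
    rw [e2, h1]
    exact step _ (1/3) (1/3) (115470053/100000000) (57735027/50000000) _ _
      le_rfl le_rfl le_rfl (by norm_num) (by norm_num) (by norm_num)
      (by norm_num) (by norm_num) (by norm_num) (by norm_num) (by norm_num) (by norm_num)
  have b3 : (10239699/25000000 : ℝ) ≤ lam 3 ∧ lam 3 ≤ 20479399/50000000 := by
    rw [e3]
    exact step _ (1830127/5000000) (36602541/100000000) (28832783/25000000) (115331133/100000000) _ _
      b2.1 b2.2 (by norm_num) (by norm_num) (by norm_num) (by norm_num)
      (by norm_num) (by norm_num) (by norm_num) (by norm_num) (by norm_num) (by norm_num)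
  have b4 : (47145889/100000000 : ℝ) ≤ lam 4 ∧ lam 4 ≤ 23572947/50000000 := by
    rw [e4]
    exact step _ (10239699/25000000) (20479399/50000000) (22942441/20000000) (114712207/100000000) _ _
      b3.1 b3.2 (by norm_num) (by norm_num) (by norm_num) (by norm_num)
      (by norm_num) (by norm_num) (by norm_num) (by norm_num) (by norm_num) (by norm_num)
  have b5 : (56864419/100000000 : ℝ) ≤ lam 5 ∧ lam 5 ≤ 56864429/100000000 := by
    rw [e5]
    exact step _ (47145889/100000000) (23572947/50000000) (4518579/4000000) (56482239/50000000) _ _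
      b4.1 b4.2 (by norm_num) (by norm_num) (by norm_num) (by norm_num)
      (by norm_num) (by norm_num) (by norm_num) (by norm_num) (by norm_num) (by norm_num)
  have b6 : (75230657/100000000 : ℝ) ≤ lam 6 ∧ lam 6 ≤ 1880767/2500000 := by
    rw [e6]
    exact step _ (56864419/100000000) (56864429/100000000) (108037937/100000000) (21607589/20000000) _ _
      b5.1 b5.2 (by norm_num) (by norm_num) (by norm_num) (by norm_num)
      (by norm_num) (by norm_num) (by norm_num) (by norm_num) (by norm_num) (by norm_num)
  have b7 : (65653857/50000000 : ℝ) ≤ lam 7 ∧ lam 7 ≤ 131307821/100000000 := by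
    rw [e7]
    exact step _ (75230657/100000000) (1880767/2500000) (89817427/100000000) (89817461/100000000) _ _
      b6.1 b6.2 (by norm_num) (by norm_num) (by norm_num) (by norm_num)
      (by norm_num) (by norm_num) (by norm_num) (by norm_num) (by norm_num) (by norm_num)
  refine ⟨?_, ?_, ?_, ?_, ?_, ?_, ?_⟩
  · rw [h1]; linarith [b2.1]
  · linarith [b2.2, b3.1]
  · linarith [b3.2, b4.1]
  · linarith [b4.2, b5.1]
  · linarith [b5.2, b6.1]
  · linarith [b6.2]
  · linarith [b7.1]
end

section
/- The map λ ↦ λ/p(λ), with p(λ) = (1/2)(1 − λ + √((1−λ)(1+3λ))), is strictly increasing on (0, 1) and satisfies λ/p(λ) > λ for all λ ∈ (0,1). -/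
lemma sqrt_key {a : ℝ} (ha : 0 < a) (ha1 : a < 1) :
    1 - 3*a < Real.sqrt ((1-a)*(1+3*a)) := by
  rcases le_or_gt (1 - 3*a) 0 with h | h
  · exact lt_of_le_of_lt h (Real.sqrt_pos.mpr (by nlinarith))
  · rw [show (1 : ℝ) - 3*a = 1 - 3*a from rfl]
    have := Real.lt_sqrt (x := 1 - 3*a) (y := (1-a)*(1+3*a)) h.le
    rw [this]
    nlinarith

lemma wp_anti {a b : ℝ} (ha : 0 < a) (hb1 : b < 1) (hab : a < b) :
    wernerProb b < wernerProb a := by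
  have hb : 0 < b := ha.trans hab
  have ha1 : a < 1 := hab.trans hb1
  have hsa := sqrt_key ha ha1
  have hsa0 : 0 < Real.sqrt ((1-a)*(1+3*a)) := Real.sqrt_pos.mpr (by nlinarith)
  have hkey : Real.sqrt ((1-b)*(1+3*b)) < Real.sqrt ((1-a)*(1+3*a)) + (b-a) := by
    rw [Real.sqrt_lt' (by linarith)]
    have hsq : Real.sqrt ((1-a)*(1+3*a)) ^ 2 = (1-a)*(1+3*a) :=
      Real.sq_sqrt (by nlinarith)
    nlinarith [sq_nonneg (b-a), mul_lt_mul_of_pos_right hsa (sub_pos.mpr hab)]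
  unfold wernerProb
  have : (1 - b) * (1 + 3 * b) = (1-b)*(1+3*b) := by ring
  rw [this]
  have : (1 - a) * (1 + 3 * a) = (1-a)*(1+3*a) := by ring
  rw [this]
  linarith

lemma wp_pos {a : ℝ} (ha : 0 < a) (ha1 : a < 1) : 0 < wernerProb a := by
  have : (0:ℝ) ≤ Real.sqrt ((1-a)*(1+3*a)) := Real.sqrt_nonneg _
  unfold wernerProb
  nlinarith

lemma wp_lt_one {a : ℝ} (ha : 0 < a) (ha1 : a < 1) : wernerProb a < 1 := by
  have h : Real.sqrt ((1-a)*(1+3*a)) < 1 + a := by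
    rw [Real.sqrt_lt' (by linarith)]
    nlinarith
  unfold wernerProb
  nlinarith

/-- The map λ ↦ λ/p(λ) is strictly increasing on (0,1) and exceeds λ there. -/
theorem sharpness_recursion_strictMono :
    StrictMonoOn (fun lam => lam / wernerProb lam) (Set.Ioo (0:ℝ) 1) ∧
    ∀ lam ∈ Set.Ioo (0:ℝ) 1, lam / wernerProb lam > lam := by
  constructor
  · intro a ha b hb hab
    have hpa := wp_pos ha.1 ha.2
    have hpb := wp_pos hb.1 hb.2
    have hanti := wp_anti ha.1 hb.2 hab
    simp only
    rw [div_lt_div_iff₀ hpa hpb]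
    nlinarith [ha.1, hb.1]
  · intro lam hl
    have hp := wp_pos hl.1 hl.2
    have hp1 := wp_lt_one hl.1 hl.2
    rw [gt_iff_lt, lt_div_iff₀ hp]
    nlinarith [hl.1]
end

section
/- If the required fidelity in the first round exceeds (4+√3)/6 ≈ 0.9553, then the resource cannot be reused: the sharpness needed satisfies λ = 2f − 1 > (1+√3)/3, and the resulting Werner probability satisfies p(λ) ≤ 1/3, i.e., the effective state is separable. Conversely, if f ≤ (4+√3)/6 then p(2f−1) ≥ 1/3. -/
/-- If the first-round fidelity f ∈ (1/2, 1] exceeds (4+√3)/6, then the required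
sharpness λ = 2f−1 exceeds (1+√3)/3 and the effective Werner probability is ≤ 1/3
(separable state): the resource cannot be reused. Conversely, if
f ≤ (4+√3)/6 then p(2f−1) ≥ 1/3. -/
theorem no_reuse_above_threshold (f : ℝ) (hf : f ∈ Set.Ioc ((1:ℝ)/2) 1) :
    (f > (4 + Real.sqrt 3) / 6 →
      2 * f - 1 > (1 + Real.sqrt 3) / 3 ∧ wernerProb (2 * f - 1) ≤ 1 / 3) ∧
    (f ≤ (4 + Real.sqrt 3) / 6 → wernerProb (2 * f - 1) ≥ 1 / 3) := by
  obtain ⟨hf1, hf2⟩ := hf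
  set s := Real.sqrt 3 with hs
  have hs2 : s ^ 2 = 3 := Real.sq_sqrt (by norm_num)
  have hs0 : (1:ℝ) ≤ s := by nlinarith [Real.sqrt_nonneg 3]
  set l := 2 * f - 1 with hl
  have hl1 : l ≤ 1 := by simp [hl]; linarith
  constructor
  · intro h
    have hlam : l > (1 + s) / 3 := by simp only [hl]; linarith
    refine ⟨hlam, ?_⟩
    have key : Real.sqrt ((1 - l) * (1 + 3 * l)) ≤ l - 1/3 := by
      have h1 : (1 - l) * (1 + 3 * l) ≤ (l - 1/3) ^ 2 := by nlinarith
      calc Real.sqrt ((1 - l) * (1 + 3 * l)) ≤ Real.sqrt ((l - 1/3) ^ 2) :=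
            Real.sqrt_le_sqrt h1
        _ = l - 1/3 := Real.sqrt_sq (by nlinarith)
    simp only [wernerProb]
    linarith
  · intro h
    have hlam : l ≤ (1 + s) / 3 := by simp only [hl]; linarith
    have key : l - 1/3 ≤ Real.sqrt ((1 - l) * (1 + 3 * l)) := by
      rcases le_or_gt l (1/3) with hc | hc
      · have := Real.sqrt_nonneg ((1 - l) * (1 + 3 * l))
        linarith
      · have h1 : (l - 1/3) ^ 2 ≤ (1 - l) * (1 + 3 * l) := by nlinarith
        calc l - 1/3 = Real.sqrt ((l - 1/3) ^ 2) := (Real.sqrt_sq (by linarith)).symm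
          _ ≤ Real.sqrt ((1 - l) * (1 + 3 * l)) := Real.sqrt_le_sqrt h1
    simp only [wernerProb]
    linarith
end

section
/- For all λ ∈ (0,1), the concurrence after white-noise weakening, E₁(λ) = max{0, (3p(λ)−1)/2} with p(λ) = (1/2)(1−λ+√((1−λ)(1+3λ))), is greater than or equal to the concurrence after orthogonal-support weakening, E₂(λ) = 2·max{0, √(λ(1−λ)/2) − λ/4}, with strict inequality on a nonempty subinterval. -/
noncomputable def concWhite (lam : ℝ) : ℝ := max 0 ((3 * wernerProb lam - 1) / 2)

noncomputable def concOrtho (lam : ℝ) : ℝ :=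
  2 * max 0 (Real.sqrt (lam * (1 - lam) / 2) - lam / 4)

lemma aux_main {lam : ℝ} (h0 : 0 < lam) (h1 : lam < 1) :
    8 * Real.sqrt (lam * (1 - lam) / 2) + lam
      < 1 + 3 * Real.sqrt ((1 - lam) * (1 + 3 * lam)) := by
  have hA := Real.sqrt_nonneg (lam * (1 - lam) / 2)
  have hS := Real.sqrt_nonneg ((1 - lam) * (1 + 3 * lam))
  have hA2 : (Real.sqrt (lam * (1 - lam) / 2))^2 = lam * (1 - lam) / 2 :=
    Real.sq_sqrt (by nlinarith)
  have hS2 : (Real.sqrt ((1 - lam) * (1 + 3 * lam)))^2 = (1 - lam) * (1 + 3 * lam) :=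
    Real.sq_sqrt (by nlinarith)
  have h83 : 8 * Real.sqrt (lam * (1 - lam) / 2)
      ≤ 3 * Real.sqrt ((1 - lam) * (1 + 3 * lam)) := by
    nlinarith [mul_nonneg hA hS, mul_pos h0 (by linarith : (0:ℝ) < 1 - lam)]
  linarith

lemma concWhite_ge {lam : ℝ} :
    (1 - 3 * lam + 3 * Real.sqrt ((1 - lam) * (1 + 3 * lam))) / 4 ≤ concWhite lam := by
  unfold concWhite wernerProb
  have := le_max_right (0:ℝ) ((3 * ((1 / 2) * (1 - lam + Real.sqrt ((1 - lam) * (1 + 3 * lam)))) - 1) / 2)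
  linarith

/-- White-noise weakening retains at least as much concurrence as
orthogonal-support weakening, with strict inequality on a nonempty
subinterval of (0,1). -/
theorem white_noise_beats_ortho :
    (∀ lam ∈ Set.Ioo (0:ℝ) 1, concOrtho lam ≤ concWhite lam) ∧
    ∃ a b : ℝ, a < b ∧ Set.Ioo a b ⊆ Set.Ioo (0:ℝ) 1 ∧
      ∀ lam ∈ Set.Ioo a b, concOrtho lam < concWhite lam := by
  constructor
  · rintro lam ⟨h0, h1⟩
    rcases le_or_gt (Real.sqrt (lam * (1 - lam) / 2) - lam / 4) 0 with h | h
    · have : concOrtho lam = 0 := by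
        unfold concOrtho
        rw [max_eq_left h]; ring
      rw [this]
      exact le_max_left _ _
    · have hmax : max 0 (Real.sqrt (lam * (1 - lam) / 2) - lam / 4)
          = Real.sqrt (lam * (1 - lam) / 2) - lam / 4 := max_eq_right h.le
      have hk := aux_main h0 h1
      have := concWhite_ge (lam := lam)
      unfold concOrtho
      rw [hmax]
      linarith
  · refine ⟨1/4, 1/3, by norm_num, ?_, ?_⟩
    · intro x hx
      exact ⟨by linarith [hx.1], by linarith [hx.2]⟩
    · rintro lam ⟨ha, hb⟩
      have h0 : (0:ℝ) < lam := by linarith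
      have h1 : lam < 1 := by linarith
      have hApos : lam / 4 < Real.sqrt (lam * (1 - lam) / 2) := by
        rw [show lam / 4 = Real.sqrt ((lam/4)^2) by rw [Real.sqrt_sq (by linarith)]]
        apply Real.sqrt_lt_sqrt (by positivity)
        nlinarith
      have hmax : max 0 (Real.sqrt (lam * (1 - lam) / 2) - lam / 4)
          = Real.sqrt (lam * (1 - lam) / 2) - lam / 4 := max_eq_right (by linarith)
      have hk := aux_main h0 h1
      have := concWhite_ge (lam := lam)
      unfold concOrtho
      rw [hmax]
      linarith
end

section
/- For white-noise weakening of Bell measurements with a maximally entangled resource, the set of sharpness parameters yielding nonclassical first-round fidelity and an entangled second-round effective state is the interval (1/3, (1+√3)/3), which strictly contains in length the corresponding interval (1/2, 8/9) for the orthogonal-Schmidt-support weakening scheme; moreover (1+√3)/3 > 8/9. -/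
lemma sqrt3_sq : (Real.sqrt 3) ^ 2 = 3 := Real.sq_sqrt (by norm_num)

lemma sqrt3_lb : (5:ℝ)/3 < Real.sqrt 3 := by
  nlinarith [sqrt3_sq, Real.sqrt_nonneg 3]

/-- For white-noise weakening, nonclassical first-round fidelity together with
an entangled second-round effective state holds exactly on (1/3, (1+√3)/3);
for orthogonal-support weakening, exactly on (1/2, 8/9). The former interval
is longer, and (1+√3)/3 > 8/9. -/
theorem white_noise_interval_better :
    (∀ lam ∈ Set.Ioc (0:ℝ) 1,
      ((1 + lam) / 2 > 2 / 3 ∧ wernerProb lam > 1 / 3) ↔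
        lam ∈ Set.Ioo ((1:ℝ)/3) ((1 + Real.sqrt 3)/3)) ∧
    (∀ lam ∈ Set.Ioc (0:ℝ) 1,
      ((1 + 2 * lam) / 3 > 2 / 3 ∧
          0 < 2 * max 0 (Real.sqrt (lam * (1 - lam) / 2) - lam / 4)) ↔
        lam ∈ Set.Ioo ((1:ℝ)/2) (8/9)) ∧
    (8:ℝ)/9 - 1/2 < (1 + Real.sqrt 3)/3 - 1/3 ∧
    (8:ℝ)/9 < (1 + Real.sqrt 3)/3 := by
  refine ⟨?_, ?_, ?_, ?_⟩
  · intro lam ⟨h0, h1⟩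
    have harg : (0:ℝ) ≤ (1 - lam) * (1 + 3 * lam) := by nlinarith
    have hs : (Real.sqrt ((1 - lam) * (1 + 3 * lam))) ^ 2 = (1 - lam) * (1 + 3 * lam) :=
      Real.sq_sqrt harg
    have hsnn := Real.sqrt_nonneg ((1 - lam) * (1 + 3 * lam))
    constructor
    · rintro ⟨hf, hw⟩
      have hl : 1/3 < lam := by linarith
      have hw' : Real.sqrt ((1 - lam) * (1 + 3 * lam)) > lam - 1/3 := by
        unfold wernerProb at hw; linarith
      refine ⟨hl, ?_⟩
      nlinarith [sqrt3_sq, Real.sqrt_nonneg 3, sq_nonneg (Real.sqrt ((1 - lam) * (1 + 3 * lam)) - (lam - 1/3))]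
    · rintro ⟨hl, hu⟩
      refine ⟨by linarith, ?_⟩
      have hsq : (lam - 1/3)^2 < (1 - lam) * (1 + 3 * lam) := by
        nlinarith [sqrt3_sq, Real.sqrt_nonneg 3]
      have hkey : lam - 1/3 < Real.sqrt ((1 - lam) * (1 + 3 * lam)) := by
        nlinarith [hs, hsnn, sq_nonneg (Real.sqrt ((1 - lam) * (1 + 3 * lam)) + (lam - 1/3))]
      unfold wernerProb; linarith
  · intro lam ⟨h0, h1⟩
    constructor
    · rintro ⟨hf, he⟩
      have hl : 1/2 < lam := by linarith
      refine ⟨hl, ?_⟩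
      have hpos : 0 < Real.sqrt (lam * (1 - lam) / 2) - lam / 4 := by
        by_contra h
        push_neg at h
        have : max 0 (Real.sqrt (lam * (1 - lam) / 2) - lam / 4) = 0 := max_eq_left h
        rw [this] at he; linarith
      have harg : (0:ℝ) ≤ lam * (1 - lam) / 2 := by nlinarith
      have hs : (Real.sqrt (lam * (1 - lam) / 2)) ^ 2 = lam * (1 - lam) / 2 :=
        Real.sq_sqrt harg
      nlinarith [Real.sqrt_nonneg (lam * (1 - lam) / 2)]
    · rintro ⟨hl, hu⟩
      refine ⟨by linarith, ?_⟩
      have harg : (0:ℝ) ≤ lam * (1 - lam) / 2 := by nlinarith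
      have hs : (Real.sqrt (lam * (1 - lam) / 2)) ^ 2 = lam * (1 - lam) / 2 :=
        Real.sq_sqrt harg
      have hgt : lam / 4 < Real.sqrt (lam * (1 - lam) / 2) := by
        nlinarith [Real.sqrt_nonneg (lam * (1 - lam) / 2)]
      have : 0 < Real.sqrt (lam * (1 - lam) / 2) - lam / 4 := by linarith
      have hmax : max 0 (Real.sqrt (lam * (1 - lam) / 2) - lam / 4)
          = Real.sqrt (lam * (1 - lam) / 2) - lam / 4 := max_eq_right this.le
      rw [hmax]; linarith
  · nlinarith [sqrt3_lb]
  · nlinarith [sqrt3_lb]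
end
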